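/- Let A ⊆ B be C*-algebras and E : B → A a conditional expectation that is multiplicative on [ABA] and has ker E = {0}. Realize A ⊆ B(H) nondegenerately and let E(x) = V*π(x)V be a minimal Stinespring decomposition, with π a representation of B on K and V : H → K with [π(B)VH] = K. Then V is an isometry and VV* equals the projection P onto [π(A)K]. -/

import Mathlib

open scoped ComplexOrder

open scoped InnerProductSpace

variable {B : Type*} [NonUnitalNormedRing B] [StarRing B] [CStarRing B]
  [NormedSpace ℂ B] [IsScalarTower ℂ B B] [SMulCommClass ℂ B B] [StarModule ℂ B]
  [CompleteSpace B] [PartialOrder B] [StarOrderedRing B]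
  {H K : Type*} [NormedAddCommGroup H] [InnerProductSpace ℂ H] [CompleteSpace H]
  [NormedAddCommGroup K] [InnerProductSpace ℂ K] [CompleteSpace K]

/-- The hereditary subalgebra `[ABA]` generated by `A` in `B`. -/
def hereditarySpan (A : NonUnitalStarSubalgebra ℂ B) : Set B :=
  closure (Submodule.span ℂ {z : B | ∃ a ∈ A, ∃ b ∈ A, ∃ x : B, z = a * x * b} : Set B)

/-- A selfadjoint element whose fifth power vanishes is zero. -/
lemma eq_zero_of_fifth_pow {t : B} (ht : IsSelfAdjoint t)
    (h5 : t * t * t * t * t = 0) : t = 0 := by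
  have sa2 : IsSelfAdjoint (t * t) := by
    simp [IsSelfAdjoint, star_mul, ht.star_eq]
  have sa4 : IsSelfAdjoint (t * t * (t * t)) := by
    simp [IsSelfAdjoint, star_mul, mul_assoc, sa2.star_eq, ht.star_eq]
  have n2 : ‖t * t‖ = ‖t‖ * ‖t‖ := by
    have h := CStarRing.norm_star_mul_self (x := t)
    rwa [ht.star_eq] at h
  have n4 : ‖t * t * (t * t)‖ = ‖t‖ * ‖t‖ * (‖t‖ * ‖t‖) := by
    have h := CStarRing.norm_star_mul_self (x := t * t)
    rwa [sa2.star_eq, n2] at h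
  have n8 : ‖t * t * (t * t) * (t * t * (t * t))‖
      = ‖t‖ * ‖t‖ * (‖t‖ * ‖t‖) * (‖t‖ * ‖t‖ * (‖t‖ * ‖t‖)) := by
    have h := CStarRing.norm_star_mul_self (x := t * t * (t * t))
    rwa [sa4.star_eq, n4] at h
  have h8 : t * t * (t * t) * (t * t * (t * t)) = 0 := by
    have h : t * t * (t * t) * (t * t * (t * t)) = t * t * t * t * t * (t * (t * t)) := by
      simp only [mul_assoc]
    rw [h, h5, zero_mul]
  rw [h8, norm_zero] at n8
  have hpow : ‖t‖ ^ 8 = 0 := by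
    have : ‖t‖ * ‖t‖ * (‖t‖ * ‖t‖) * (‖t‖ * ‖t‖ * (‖t‖ * ‖t‖)) = ‖t‖ ^ 8 := by ring
    rw [← this, ← n8]
  have hn : ‖t‖ = 0 := by
    exact pow_eq_zero_iff (by norm_num) |>.mp hpow
  exact norm_eq_zero.mp hn

theorem stinespring_isometry_projection (A : NonUnitalStarSubalgebra ℂ B)
    (hA : IsClosed (A : Set B)) (E : B →L[ℂ] B) (hmem : ∀ x, E x ∈ A)
    (hidem : ∀ a ∈ A, E a = a) (hpos : ∀ x : B, 0 ≤ x → 0 ≤ E x)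
    (hleft : ∀ a ∈ A, ∀ x, E (a * x) = a * E x)
    (hright : ∀ a ∈ A, ∀ x, E (x * a) = E x * a)
    (hmult : ∀ x ∈ hereditarySpan A, ∀ y ∈ hereditarySpan A, E (x * y) = E x * E y)
    (hker : ∀ x : B, (∀ b c : B, E (b * x * c) = 0) → x = 0)
    (σ : A →⋆ₙₐ[ℂ] (H →L[ℂ] H)) (hσinj : Function.Injective σ)
    (hnondeg : (Submodule.span ℂ
      {v : H | ∃ (a : A) (ξ : H), v = σ a ξ}).topologicalClosure = ⊤)
    (π : B →⋆ₙₐ[ℂ] (K →L[ℂ] K)) (V : H →L[ℂ] K)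
    (hSt : ∀ x : B, σ ⟨E x, hmem x⟩ =
      (ContinuousLinearMap.adjoint V).comp ((π x).comp V))
    (hmin : (Submodule.span ℂ
      {v : K | ∃ (x : B) (ξ : H), v = π x (V ξ)}).topologicalClosure = ⊤) :
    (ContinuousLinearMap.adjoint V).comp V = ContinuousLinearMap.id ℂ H ∧
    IsSelfAdjoint (V.comp (ContinuousLinearMap.adjoint V)) ∧
    (∀ v : K, V (ContinuousLinearMap.adjoint V v) ∈
      (Submodule.span ℂ {v : K | ∃ (a : A) (ξ : K), v = π ↑a ξ}).topologicalClosure) ∧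
    (∀ v ∈ (Submodule.span ℂ
        {v : K | ∃ (a : A) (ξ : K), v = π ↑a ξ}).topologicalClosure,
      V (ContinuousLinearMap.adjoint V v) = v) := by
  set V' := ContinuousLinearMap.adjoint V with hV'
  -- `σ` applied to an element of `A` given by `E`:
  have hStA : ∀ (a : A) (ξ : H), σ a ξ = V' (π ↑a (V ξ)) := by
    intro a ξ
    have h1 : (⟨E ↑a, hmem ↑a⟩ : A) = a := Subtype.ext (hidem _ a.2)
    have := hSt (↑a : B)
    rw [h1] at this
    rw [this]; rfl
  -- E vanishes on (ax - E(ax))* (ax - E(ax))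
  have hE0 : ∀ (a : A) (x : B),
      E (star ((a : B) * x - E ((a : B) * x)) * ((a : B) * x - E ((a : B) * x))) = 0 := by
    intro a x
    set c := E ((a : B) * x) with hc
    have hcA : c ∈ A := hmem _
    set d := (a : B) * x - c with hd
    set t := E (star d * d) with htdef
    have htA : t ∈ A := hmem _
    have htpos : (0 : B) ≤ t := hpos _ (star_mul_self_nonneg d)
    have htsa : IsSelfAdjoint t := .of_nonneg htpos
    have ht2A : t * t ∈ A := mul_mem htA htA
    -- membership of the two factors in the hereditary span
    have hSsub : {z : B | ∃ a ∈ A, ∃ b ∈ A, ∃ x : B, z = a * x * b} ⊆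
        (Submodule.span ℂ {z : B | ∃ a ∈ A, ∃ b ∈ A, ∃ x : B, z = a * x * b} : Set B) :=
      Submodule.subset_span
    have hmem1 : t * t * star d ∈ hereditarySpan A := by
      have heq : t * t * star d
          = t * (t * star x) * star (a : B) - t * t * star c := by
        rw [hd, star_sub, star_mul, mul_sub]
        simp only [mul_assoc]
      apply subset_closure
      rw [heq]
      refine sub_mem (hSsub ?_) (hSsub ?_)
      · exact ⟨t, htA, star (a : B), star_mem a.2, t * star x, rfl⟩
      · exact ⟨t, htA, star c, star_mem hcA, t, rfl⟩
    have hmem2 : d * (t * t) ∈ hereditarySpan A := by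
      have heq : d * (t * t) = (a : B) * (x * t) * t - c * t * t := by
        rw [hd, sub_mul]
        simp only [mul_assoc]
      apply subset_closure
      rw [heq]
      refine sub_mem (hSsub ?_) (hSsub ?_)
      · exact ⟨(a : B), a.2, t, htA, x * t, rfl⟩
      · exact ⟨c, hcA, t, htA, t, rfl⟩
    have hEd : E d = 0 := by
      rw [hd, map_sub, hidem _ hcA, sub_self]
    have hrhs : E (d * (t * t)) = 0 := by
      rw [hright _ ht2A, hEd, zero_mul]
    have hmul := hmult _ hmem1 _ hmem2
    rw [hrhs, mul_zero] at hmul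
    -- LHS is t^5
    have hassoc : t * t * star d * (d * (t * t)) = t * t * (star d * d * (t * t)) := by
      simp only [mul_assoc]
    rw [hassoc] at hmul
    have e1 : E (t * t * (star d * d * (t * t))) = t * t * (E (star d * d) * (t * t)) := by
      rw [hleft _ ht2A, hright _ ht2A]
    rw [e1] at hmul
    have h5 : t * t * t * t * t = 0 := by
      have : t * t * t * t * t = t * t * (E (star d * d) * (t * t)) := by
        rw [← htdef]; simp only [mul_assoc]
      rw [this, hmul]
    exact eq_zero_of_fifth_pow htsa h5
  -- the key identity (★): π(ax) V = π(E(ax)) V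
  have hstar : ∀ (a : A) (x : B) (ξ : H),
      π ((a : B) * x) (V ξ) = π (E ((a : B) * x)) (V ξ) := by
    intro a x ξ
    set c := E ((a : B) * x) with hc
    set d := (a : B) * x - c with hd
    have h0 : π d (V ξ) = 0 := by
      rw [← inner_self_eq_zero (𝕜 := ℂ)]
      have h1 : ⟪π d (V ξ), π d (V ξ)⟫_ℂ = ⟪V ξ, π (star d) (π d (V ξ))⟫_ℂ := by
        rw [map_star, ContinuousLinearMap.star_eq_adjoint,
          ContinuousLinearMap.adjoint_inner_right]
      have h2 : π (star d) (π d (V ξ)) = π (star d * d) (V ξ) := by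
        rw [map_mul]; rfl
      have h3 : ⟪V ξ, π (star d * d) (V ξ)⟫_ℂ = ⟪ξ, V' (π (star d * d) (V ξ))⟫_ℂ := by
        rw [hV', ContinuousLinearMap.adjoint_inner_right]
      have h4 : V' (π (star d * d) (V ξ)) = σ ⟨E (star d * d), hmem _⟩ ξ := by
        rw [hSt]; rfl
      have h5 : (⟨E (star d * d), hmem _⟩ : A) = 0 := Subtype.ext (hE0 a x)
      rw [h1, h2, h3, h4, h5, map_zero]
      simp
    have : π d (V ξ) = π ((a : B) * x) (V ξ) - π c (V ξ) := by
      rw [hd, map_sub]; rfl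
    rw [this] at h0
    exact sub_eq_zero.mp h0
  -- intertwining: V σ(a) = π(a) V
  have hint : ∀ (a : A) (ξ : H), V (σ a ξ) = π (a : B) (V ξ) := by
    intro a ξ
    set u := V (σ a ξ) - π (a : B) (V ξ) with hu
    suffices hsuff : ∀ w : K, ⟪u, w⟫_ℂ = 0 by
      have := inner_self_eq_zero (𝕜 := ℂ) (x := u) |>.mp (hsuff u)
      rw [hu] at this
      exact sub_eq_zero.mp this
    intro w
    have hwker : (Submodule.span ℂ
        {v : K | ∃ (x : B) (ξ : H), v = π x (V ξ)}).topologicalClosure ≤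
        LinearMap.ker (innerSL ℂ u : K →ₗ[ℂ] ℂ) := by
      apply Submodule.topologicalClosure_minimal
      · rw [Submodule.span_le]
        rintro w ⟨x, η, rfl⟩
        have lhs1 : ⟪V (σ a ξ), π x (V η)⟫_ℂ = ⟪σ a ξ, V' (π x (V η))⟫_ℂ := by
          rw [hV', ContinuousLinearMap.adjoint_inner_right]
        have lhs2 : V' (π x (V η)) = σ ⟨E x, hmem x⟩ η := by rw [hSt]; rfl
        have lhs3 : ⟪σ a ξ, σ ⟨E x, hmem x⟩ η⟫_ℂ
            = ⟪ξ, σ (star a * ⟨E x, hmem x⟩) η⟫_ℂ := by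
          rw [map_mul, map_star, ContinuousLinearMap.star_eq_adjoint,
            FunLike.coe_mul_eq_comp, Function.comp_apply,
            ContinuousLinearMap.adjoint_inner_right]
        set y : A := star a * ⟨E x, hmem x⟩ with hy
        have lhs4 : σ y η = V' (π (y : B) (V η)) := hStA y η
        have lhs5 : ⟪ξ, V' (π (y : B) (V η))⟫_ℂ = ⟪V ξ, π (y : B) (V η)⟫_ℂ := by
          rw [hV', ContinuousLinearMap.adjoint_inner_right]
        have rhs1 : ⟪π (a : B) (V ξ), π x (V η)⟫_ℂ
            = ⟪V ξ, π (star (a : B) * x) (V η)⟫_ℂ := by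
          have hconv : π (star (a : B) * x) (V η)
              = (ContinuousLinearMap.adjoint (π (a : B))) (π x (V η)) := by
            have h1 : π (star (a : B) * x) (V η)
                = π (star (a : B)) (π x (V η)) := by rw [map_mul]; rfl
            rw [h1, map_star, ContinuousLinearMap.star_eq_adjoint]
          rw [hconv, ContinuousLinearMap.adjoint_inner_right]
        have rhs2 : π (star (a : B) * x) (V η) = π (E (star (a : B) * x)) (V η) := by
          have := hstar (star a) x η
          simpa using this
        have hyval : ((y : B)) = E (star (a : B) * x) := by
          rw [hy, hleft _ (star_mem a.2)]
          rfl
        have : ⟪u, π x (V η)⟫_ℂ = 0 := by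
          rw [hu, inner_sub_left, lhs1, lhs2, lhs3, lhs4, lhs5, rhs1, rhs2, hyval,
            sub_self]
        exact this
      · exact ContinuousLinearMap.isClosed_ker (innerSL ℂ u)
    have : w ∈ LinearMap.ker (innerSL ℂ u : K →ₗ[ℂ] ℂ) := hwker (by rw [hmin]; trivial)
    exact this
  -- conclusion 1 : V* V = 1
  have hisom : V'.comp V = ContinuousLinearMap.id ℂ H := by
    have hker1 : (⊤ : Submodule ℂ H) ≤
        LinearMap.ker ((V'.comp V - ContinuousLinearMap.id ℂ H : H →L[ℂ] H) : H →ₗ[ℂ] H) := by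
      rw [← hnondeg]
      apply Submodule.topologicalClosure_minimal
      · rw [Submodule.span_le]
        rintro v ⟨a, η, rfl⟩
        have : V' (V (σ a η)) = σ a η := by
          rw [hint a η, ← hStA a η]
        simp only [SetLike.mem_coe, LinearMap.mem_ker, ContinuousLinearMap.coe_sub',
          Pi.sub_apply, ContinuousLinearMap.coe_comp', Function.comp_apply,
          ContinuousLinearMap.coe_id', id_eq, ContinuousLinearMap.coe_coe]
        rw [this, sub_self]
      · exact ContinuousLinearMap.isClosed_ker _
    ext ξ
    have : (V'.comp V - ContinuousLinearMap.id ℂ H) ξ = 0 := hker1 trivial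
    simpa [sub_eq_zero] using this
  refine ⟨hisom, ?_, ?_, ?_⟩
  · rw [IsSelfAdjoint, ContinuousLinearMap.star_eq_adjoint,
      ContinuousLinearMap.adjoint_comp, hV', ContinuousLinearMap.adjoint_adjoint]
  · -- range of V lands in [π(A)K]
    have hrange : ∀ ξ : H, V ξ ∈ (Submodule.span ℂ
        {v : K | ∃ (a : A) (ζ : K), v = π ↑a ζ}).topologicalClosure := by
      set M := (Submodule.span ℂ
        {v : K | ∃ (a : A) (ζ : K), v = π ↑a ζ}).topologicalClosure with hM
      intro ξ
      have hN : (⊤ : Submodule ℂ H) ≤ M.comap (V : H →ₗ[ℂ] K) := by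
        rw [← hnondeg]
        apply Submodule.topologicalClosure_minimal
        · rw [Submodule.span_le]
          rintro v ⟨a, η, rfl⟩
          simp only [SetLike.mem_coe, Submodule.mem_comap, ContinuousLinearMap.coe_coe]
          rw [hint a η]
          exact Submodule.le_topologicalClosure _ (Submodule.subset_span ⟨a, V η, rfl⟩)
        · have hMcl : IsClosed (M : Set K) := by
            rw [hM]; exact Submodule.isClosed_topologicalClosure _
          exact IsClosed.preimage V.continuous hMcl
      exact hN (Submodule.mem_top) 
    intro v
    exact hrange (V' v)
  · -- VV* is the identity on [π(A)K]
    intro v hv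
    set L := V.comp V' - ContinuousLinearMap.id ℂ K with hL
    have hgen : ∀ (a : A) (ζ : K), V (V' (π (a : B) ζ)) = π (a : B) ζ := by
      intro a ζ
      have hkerL : (⊤ : Submodule ℂ K) ≤
          LinearMap.ker ((L.comp (π (a : B)) : K →L[ℂ] K) : K →ₗ[ℂ] K) := by
        rw [← hmin]
        apply Submodule.topologicalClosure_minimal
        · rw [Submodule.span_le]
          rintro w ⟨x, ξ, rfl⟩
          have e1 : π (a : B) (π x (V ξ)) = π ((a : B) * x) (V ξ) := by
            rw [map_mul]; rfl
          have e2 : V' (π ((a : B) * x) (V ξ)) = σ ⟨E ((a : B) * x), hmem _⟩ ξ := by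
            rw [hSt]; rfl
          have e3 : V (σ (⟨E ((a : B) * x), hmem _⟩ : A) ξ)
              = π (E ((a : B) * x)) (V ξ) := hint _ ξ
          simp only [SetLike.mem_coe, LinearMap.mem_ker, ContinuousLinearMap.coe_comp',
            Function.comp_apply, hL, ContinuousLinearMap.coe_sub', Pi.sub_apply,
            ContinuousLinearMap.coe_id', id_eq, ContinuousLinearMap.coe_coe]
          rw [e1, e2, e3, ← hstar a x ξ, sub_self]
        · exact ContinuousLinearMap.isClosed_ker _
      have := hkerL (Submodule.mem_top (x := ζ))
      simp only [LinearMap.mem_ker, ContinuousLinearMap.coe_comp', Function.comp_apply,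
        hL, ContinuousLinearMap.coe_sub', Pi.sub_apply, ContinuousLinearMap.coe_id',
        id_eq] at this
      exact sub_eq_zero.mp this
    have hvker : v ∈ LinearMap.ker (L : K →ₗ[ℂ] K) := by
      refine Submodule.topologicalClosure_minimal _ ?_
        (ContinuousLinearMap.isClosed_ker L) hv
      rw [Submodule.span_le]
      rintro w ⟨a, ζ, rfl⟩
      simp only [SetLike.mem_coe, LinearMap.mem_ker, hL, ContinuousLinearMap.coe_sub',
        Pi.sub_apply, ContinuousLinearMap.coe_comp', Function.comp_apply,
        ContinuousLinearMap.coe_id', id_eq, ContinuousLinearMap.coe_coe]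
      rw [hgen a ζ, sub_self]
    have : L v = 0 := hvker
    simp only [hL, ContinuousLinearMap.coe_sub', Pi.sub_apply,
      ContinuousLinearMap.coe_comp', Function.comp_apply, ContinuousLinearMap.coe_id',
      id_eq] at this
    exact sub_eq_zero.mp this
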